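/- arXiv:2006.05871 — 4 statements merged into one kernel-verified Lean document; each statement's English description precedes it below -/
import Mathlib

section
/- Let SA[sp..ep] be the suffix-array interval of all occurrences of a pattern P of length m. A position i ∈ [sp..ep] is the leftmost occurrence of document DA[i] inside DA[sp..ep] if and only if C[i] < sp, where C[i] is the largest position j < i with DA[j] = DA[i] (and C[i] = 0 if no such j exists). -/
/-- key property behind Muthukrishnan's document listing.
`DA[1..n]` is the document array and `C[1..n]` the previous-occurrence array:
`C i` is the largest `j < i` with `DA j = DA i`, and `C i = 0` if no such `j`
exists.  For the suffix-array interval `[sp..ep]` of all occurrences of a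
pattern, a position `i ∈ [sp..ep]` is the leftmost occurrence of document
`DA i` inside `DA[sp..ep]` **iff** `C i < sp`. -/
theorem leftmost_iff_C_lt (n : ℕ) (DA C : ℕ → ℕ) (sp ep : ℕ)
    (hsp : 1 ≤ sp) (hep : ep ≤ n)
    (hC : ∀ i, 1 ≤ i → i ≤ n →
      (C i = 0 ∧ ∀ j, 1 ≤ j → j < i → DA j ≠ DA i) ∨
      (1 ≤ C i ∧ C i < i ∧ DA (C i) = DA i ∧
        ∀ j, C i < j → j < i → DA j ≠ DA i)) :
    ∀ i, sp ≤ i → i ≤ ep →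
      ((∀ j, sp ≤ j → j < i → DA j ≠ DA i) ↔ C i < sp) := by
  intro i hspi hiep
  have hi1 : 1 ≤ i := le_trans hsp hspi
  have hin : i ≤ n := le_trans hiep hep
  rcases hC i hi1 hin with ⟨h0, hall⟩ | ⟨h1, hlt, heq, hmax⟩
  · constructor
    · intro _; omega
    · intro _ j hj hji
      exact hall j (le_trans hsp hj) hji
  · constructor
    · intro hleft
      by_contra hge
      push_neg at hge
      exact hleft (C i) hge hlt heq
    · intro hCsp j hj hji
      exact hmax j (lt_of_lt_of_le hCsp hj) hji
end

section
/- With C defined as the previous-occurrence array of the document array DA, for any interval [sp..ep] the number of positions i ∈ [sp..ep] with C[i] < sp equals the number of distinct document identifiers appearing in DA[sp..ep]. -/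
/-- With `C` the previous-occurrence array of the document
array `DA` (`C i` is the largest `j < i` with `DA j = DA i`, or `0` if none),
for any interval `[sp..ep]` the number of positions `i ∈ [sp..ep]` with
`C i < sp` equals the number of distinct document identifiers appearing in
`DA[sp..ep]`. -/
theorem card_C_lt_eq_card_distinct (n : ℕ) (DA C : ℕ → ℕ) (sp ep : ℕ)
    (hsp : 1 ≤ sp) (hep : ep ≤ n)
    (hC : ∀ i, 1 ≤ i → i ≤ n →
      (C i = 0 ∧ ∀ j, 1 ≤ j → j < i → DA j ≠ DA i) ∨
      (1 ≤ C i ∧ C i < i ∧ DA (C i) = DA i ∧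
        ∀ j, C i < j → j < i → DA j ≠ DA i)) :
    ((Finset.Icc sp ep).filter (fun i => C i < sp)).card
      = ((Finset.Icc sp ep).image DA).card := by
  apply Finset.card_bij (fun i _ => DA i)
  · intro i hi
    simp only [Finset.mem_filter] at hi
    exact Finset.mem_image_of_mem DA hi.1
  · -- injectivity
    have key : ∀ a b : ℕ, a ∈ (Finset.Icc sp ep).filter (fun i => C i < sp) →
        b ∈ (Finset.Icc sp ep).filter (fun i => C i < sp) → a < b → DA a ≠ DA b := by
      intro a b ha hb hab
      simp only [Finset.mem_filter, Finset.mem_Icc] at ha hb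
      obtain ⟨⟨hsa, hae⟩, hCa⟩ := ha
      obtain ⟨⟨hsb, hbe⟩, hCb⟩ := hb
      rcases hC b (le_trans hsp hsb) (le_trans hbe hep) with ⟨_, h2⟩ | ⟨_, _, _, h2⟩
      · exact h2 a (le_trans hsp hsa) hab
      · exact h2 a (lt_of_lt_of_le hCb hsa) hab
    intro a ha b hb hab
    rcases lt_trichotomy a b with h | h | h
    · exact absurd hab (key a b ha hb h)
    · exact h
    · exact absurd hab.symm (key b a hb ha h)
  · -- surjectivity
    intro v hv
    obtain ⟨k, hk, hkv⟩ := Finset.mem_image.mp hv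
    set S := (Finset.Icc sp ep).filter (fun k => DA k = v) with hS
    have hne : S.Nonempty := ⟨k, Finset.mem_filter.mpr ⟨hk, hkv⟩⟩
    set i := S.min' hne with hi
    have hiS : i ∈ S := S.min'_mem hne
    simp only [hS, Finset.mem_filter, Finset.mem_Icc] at hiS
    obtain ⟨⟨hsi, hie⟩, hiv⟩ := hiS
    have hCi : C i < sp := by
      by_contra hge
      push_neg at hge
      rcases hC i (le_trans hsp hsi) (le_trans hie hep) with ⟨h0, _⟩ | ⟨_, hlt, heq, _⟩
      · omega
      · have : C i ∈ S := Finset.mem_filter.mpr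
          ⟨Finset.mem_Icc.mpr ⟨hge, le_trans (le_of_lt hlt) hie⟩, heq.trans hiv⟩
        have := S.min'_le _ this
        omega
    exact ⟨i, Finset.mem_filter.mpr ⟨Finset.mem_Icc.mpr ⟨hsi, hie⟩, hCi⟩, hiv⟩
end

section
/- If P occurs in the concatenation D at positions forming the suffix-array interval [sp..ep], and for a document T_d the positions ℓ and r are respectively the leftmost and rightmost positions in [sp..ep] with DA[·] = d, then the number of occurrences of P in T_d equals r' − ℓ' + 1, where ℓ' and r' are the positions in the suffix array of T_d of the suffixes of T_d corresponding (by translation of text offsets) to SA[ℓ] and SA[r]. -/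
/-- Length of the longest common prefix of two lists. -/
def lcpLen (a b : List ℕ) : ℕ := ((a.zip b).takeWhile (fun p => p.1 == p.2)).length

/-- The suffix of `s` starting at 1-based position `p`. -/
def suf (s : List ℕ) (p : ℕ) : List ℕ := s.drop (p - 1)

/-- Strict lexicographic order on lists of naturals. -/
def listLt (a b : List ℕ) : Prop := List.Lex (· < ·) a b

/-- 1-based starting position of document `k` in the concatenation `T 1 ⬝ T 2 ⋯ T t`. -/
def docStart (T : ℕ → List ℕ) (k : ℕ) : ℕ :=
  1 + ((List.range (k - 1)).map (fun j => (T (j + 1)).length)).sum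

/-- Concatenation `𝒟 = T 1 ⬝ T 2 ⋯ T t` of the documents. -/
def concatDocs (T : ℕ → List ℕ) (t : ℕ) : List ℕ :=
  ((List.range t).map (fun j => T (j + 1))).flatten

/- ------------------ auxiliary lemmas ------------------- -/

lemma listLt_asymm {a b : List ℕ} (h : listLt a b) : ¬ listLt b a :=
  fun h' => (List.Lex.asymm (α := ℕ) (· < ·)).asymm a b h h'

lemma listLt_irrefl (a : List ℕ) : ¬ listLt a a := fun h => listLt_asymm h h

lemma listLt_trichotomy (a b : List ℕ) : listLt a b ∨ a = b ∨ listLt b a :=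
  by
    by_cases h1 : listLt a b
    · exact Or.inl h1
    by_cases h2 : listLt b a
    · exact Or.inr (Or.inr h2)
    exact Or.inr (Or.inl ((List.Lex.trichotomous (α := ℕ) (· < ·)).trichotomous a b h1 h2))

/-- a list between two lists with prefix `P` also has prefix `P`. -/
lemma prefix_of_between : ∀ (P a b c : List ℕ), ¬ listLt b a → ¬ listLt c b →
    P <+: a → P <+: c → P <+: b
  | [], _, _, _, _, _, _, _ => List.nil_prefix
  | x :: P, a, b, c, hba, hcb, hPa, hPc => by
    obtain ⟨a', rfl⟩ := hPa
    obtain ⟨c', rfl⟩ := hPc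
    match b with
    | [] => exact absurd List.Lex.nil hba
    | y :: b' =>
      have hxy : x = y := by
        rcases lt_trichotomy x y with h | h | h
        · exact absurd (List.Lex.rel h) hcb
        · exact h
        · exact absurd (List.Lex.rel h) hba
      subst hxy
      have h1 : ¬ listLt b' (P ++ a') := fun h => hba (List.Lex.cons h)
      have h2 : ¬ listLt (P ++ c') b' := fun h => hcb (List.Lex.cons h)
      have := prefix_of_between P (P ++ a') b' (P ++ c') h1 h2
        (List.prefix_append _ _) (List.prefix_append _ _)
      exact List.cons_prefix_cons.mpr ⟨rfl, this⟩

lemma lex_append_of_lex : ∀ {a b : List ℕ}, listLt a b → ¬ a <+: b →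
    ∀ R, listLt (a ++ R) (b ++ R) := by
  intro a b h
  induction h with
  | nil => intro hp _; exact absurd List.nil_prefix hp
  | @rel x l₁ y l₂ h => intro _ R; exact List.Lex.rel h
  | @cons x l₁ l₂ h ih =>
      intro hp R
      exact List.Lex.cons (ih (fun hpp => hp (List.cons_prefix_cons.mpr ⟨rfl, hpp⟩)) R)

lemma lex_of_lex_append {a b R : List ℕ} (h : listLt (a ++ R) (b ++ R))
    (hab : ¬ a <+: b) (hba : ¬ b <+: a) : listLt a b := by
  rcases listLt_trichotomy a b with h1 | rfl | h1
  · exact h1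
  · exact absurd h (listLt_irrefl _)
  · exact absurd h (listLt_asymm (lex_append_of_lex h1 hba R))

lemma concatDocs_add (T : ℕ → List ℕ) (a b : ℕ) :
    concatDocs T (a + b)
      = concatDocs T a ++ ((List.range b).map (fun j => T (a + j + 1))).flatten := by
  unfold concatDocs
  rw [List.range_add, List.map_append, List.flatten_append]
  congr 2
  rw [List.map_map]
  apply List.map_congr_left
  intro j _
  simp [Function.comp]

lemma concat_split (T : ℕ → List ℕ) (t d : ℕ) (hd1 : 1 ≤ d) (hdt : d ≤ t) :
    ∃ B : List ℕ, concatDocs T t = concatDocs T (d - 1) ++ (T d ++ B) := by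
  have h : t = (d - 1) + (1 + (t - d)) := by omega
  rw [h, concatDocs_add]
  have h2 : 1 + (t - d) = (t - d) + 1 := by omega
  rw [h2, List.range_succ_eq_map, List.map_cons, List.flatten_cons]
  refine ⟨((List.range (t - d)).map (fun j => T (d - 1 + Nat.succ j + 1))).flatten, ?_⟩
  rw [List.map_map]
  have h3 : d - 1 + 0 + 1 = d := by omega
  rw [h3]
  rfl

lemma docStart_eq_length (T : ℕ → List ℕ) (d : ℕ) :
    docStart T d = (concatDocs T (d - 1)).length + 1 := by
  rw [docStart, concatDocs, List.length_flatten, List.map_map]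
  have h : (List.length ∘ fun j => T (j + 1)) = fun j => (T (j + 1)).length := rfl
  rw [h]
  omega

lemma docStart_mono (T : ℕ → List ℕ) {a b : ℕ} (h : a ≤ b) :
    docStart T a ≤ docStart T b := by
  unfold docStart
  have h2 : b - 1 = (a - 1) + ((b - 1) - (a - 1)) := by omega
  rw [h2, List.range_add, List.map_append, List.sum_append]
  omega

lemma docStart_succ (T : ℕ → List ℕ) {k : ℕ} (hk : 1 ≤ k) :
    docStart T (k + 1) = docStart T k + (T k).length := by
  unfold docStart
  have h : (k + 1) - 1 = (k - 1) + 1 := by omega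
  rw [h, List.range_succ, List.map_append, List.sum_append]
  have h2 : k - 1 + 1 = k := by omega
  simp [h2]
  omega

lemma doc_unique (T : ℕ → List ℕ) {t d e g : ℕ}
    (hd1 : 1 ≤ d) (hdt : d ≤ t) (he1 : 1 ≤ e) (het : e ≤ t)
    (h1 : docStart T d ≤ g) (h2 : g < docStart T d + (T d).length)
    (h3 : docStart T e ≤ g) (h4 : g < docStart T e + (T e).length) : d = e := by
  by_contra hne
  rcases Nat.lt_or_ge d e with h | h
  · have hm := docStart_mono T (show d + 1 ≤ e by omega)
    rw [docStart_succ T hd1] at hm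
    omega
  · have h' : e < d := by omega
    have hm := docStart_mono T (show e + 1 ≤ d by omega)
    rw [docStart_succ T he1] at hm
    omega

lemma getLast?_suf (s : List ℕ) {p : ℕ} (hp2 : p ≤ s.length) (hp1 : 1 ≤ p) :
    (suf s p).getLast? = s.getLast? := by
  have hne : s.drop (p - 1) ≠ [] := by
    intro h
    rw [List.drop_eq_nil_iff] at h
    omega
  conv_rhs => rw [← List.take_append_drop (p - 1) s]
  rw [suf, List.getLast?_append]
  cases h : (s.drop (p - 1)).getLast? with
  | none => exact absurd (List.getLast?_eq_none_iff.mp h) hne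
  | some a => rfl

lemma sent_mem_suf {s : List ℕ} {z p : ℕ} (hz : s.getLast? = some z)
    (hp1 : 1 ≤ p) (hp2 : p ≤ s.length) : z ∈ suf s p := by
  have := getLast?_suf s hp2 hp1
  rw [hz] at this
  exact List.mem_of_getLast? this

lemma suf_not_prefix {s : List ℕ} {z p q : ℕ} (hz : s.getLast? = some z)
    (hcount : s.count z = 1) (hp1 : 1 ≤ p) (hp2 : p ≤ s.length)
    (hq1 : 1 ≤ q) (hq2 : q ≤ s.length) (hne : p ≠ q) :
    ¬ suf s p <+: suf s q := by
  intro hpre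
  have hlp : (suf s p).length = s.length - (p - 1) := List.length_drop
  have hlq : (suf s q).length = s.length - (q - 1) := List.length_drop
  have hlen := hpre.length_le
  rcases Nat.lt_or_ge p q with h | h
  · omega
  · have h' : q < p := by omega
    obtain ⟨rest, hrest⟩ := hpre
    have hrne : rest ≠ [] := by
      intro hr
      subst hr
      rw [List.append_nil] at hrest
      have := congrArg List.length hrest
      omega
    have hmem1 : z ∈ suf s p := sent_mem_suf hz hp1 hp2
    have hmem2 : z ∈ rest := by
      have hgl : (suf s q).getLast? = some z := by rw [getLast?_suf s hq2 hq1, hz]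
      rw [← hrest, List.getLast?_append] at hgl
      cases hr : rest.getLast? with
      | none => exact absurd (List.getLast?_eq_none_iff.mp hr) hrne
      | some a =>
          rw [hr] at hgl
          simp at hgl
          subst hgl
          exact List.mem_of_getLast? hr
    have hc1 : 1 ≤ (suf s p).count z := List.count_pos_iff.mpr hmem1
    have hc2 : 1 ≤ rest.count z := List.count_pos_iff.mpr hmem2
    have hcq : (suf s q).count z ≤ 1 := by
      rw [← hcount]
      exact ((List.drop_sublist _ _).count_le z)
    rw [← hrest, List.count_append] at hcq
    omega

/-- correctness of Sadakane's term-frequency scheme.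
Setting: sentinel-terminated documents with concatenation `𝒟` of length `n`,
suffix array `SA`, document array `DA`, per-document suffix arrays `SAd` with
inverses `ISAd`.  Let `[sp..ep]` be the suffix-array interval of all
occurrences of a pattern `P` (containing no sentinel) in `𝒟`, and let `l` and
`r` be respectively the leftmost and rightmost positions in `[sp..ep]` with
`DA · = d`.  With `l' = ISAd d` applied to the document-local offset of
`SA l`, and `r'` likewise for `SA r`, the number of occurrences of `P` in
`T d` equals `r' − l' + 1`. -/
theorem term_frequency_eq (t n : ℕ) (T : ℕ → List ℕ) (sent : ℕ → ℕ)
    (SA DA : ℕ → ℕ) (SAd ISAd : ℕ → ℕ → ℕ) (P : List ℕ)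
    (sp ep d l r : ℕ)
    (hn : n = (concatDocs T t).length)
    (hsent : ∀ k, 1 ≤ k → k ≤ t → T k ≠ [] ∧ (T k).getLast? = some (sent k) ∧
      (T k).count (sent k) = 1 ∧ (∀ x ∈ T k, x ≠ sent k → sent k < x) ∧
      (∀ k', 1 ≤ k' → k' ≤ t → k' ≠ k → sent k ∉ T k'))
    (hbij : Set.BijOn SA (Set.Icc 1 n) (Set.Icc 1 n))
    (hsort : ∀ i j, i ∈ Set.Icc 1 n → j ∈ Set.Icc 1 n → i < j →
      listLt (suf (concatDocs T t) (SA i)) (suf (concatDocs T t) (SA j)))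
    (hDA : ∀ i ∈ Set.Icc 1 n, 1 ≤ DA i ∧ DA i ≤ t ∧
      docStart T (DA i) ≤ SA i ∧ SA i < docStart T (DA i) + (T (DA i)).length)
    (hSAd : ∀ k, 1 ≤ k → k ≤ t →
      Set.BijOn (SAd k) (Set.Icc 1 (T k).length) (Set.Icc 1 (T k).length))
    (hsortd : ∀ k, 1 ≤ k → k ≤ t → ∀ i j, i ∈ Set.Icc 1 (T k).length →
      j ∈ Set.Icc 1 (T k).length → i < j →
      listLt (suf (T k) (SAd k i)) (suf (T k) (SAd k j)))
    (hISAd : ∀ k, 1 ≤ k → k ≤ t → ∀ p ∈ Set.Icc 1 (T k).length,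
      ISAd k p ∈ Set.Icc 1 (T k).length ∧ SAd k (ISAd k p) = p)
    (hP : ∀ k, 1 ≤ k → k ≤ t → sent k ∉ P)
    (hsp : 1 ≤ sp) (hep : ep ≤ n)
    (hint : ∀ i ∈ Set.Icc 1 n,
      ((sp ≤ i ∧ i ≤ ep) ↔ P <+: suf (concatDocs T t) (SA i)))
    (hd : 1 ≤ d ∧ d ≤ t)
    (hl : sp ≤ l ∧ l ≤ ep ∧ DA l = d ∧
      ∀ j, sp ≤ j → j ≤ ep → DA j = d → l ≤ j)
    (hr : sp ≤ r ∧ r ≤ ep ∧ DA r = d ∧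
      ∀ j, sp ≤ j → j ≤ ep → DA j = d → j ≤ r) :
    ((Finset.Icc 1 (T d).length).filter (fun p => P <+: suf (T d) p)).card
      = ISAd d (SA r - docStart T d + 1) - ISAd d (SA l - docStart T d + 1) + 1 := by
  obtain ⟨hd1, hdt⟩ := hd
  obtain ⟨hlsp, hlep, hlDA, hlmin⟩ := hl
  obtain ⟨hrsp, hrep, hrDA, hrmax⟩ := hr
  set D := concatDocs T t with hDdef
  set Ld := (T d).length with hLd
  set st := docStart T d with hst
  obtain ⟨B, hB⟩ := concat_split T t d hd1 hdt
  have hstlen : st = (concatDocs T (d - 1)).length + 1 := docStart_eq_length T d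
  have hst1 : 1 ≤ st := by omega
  have hnsplit : n = (concatDocs T (d - 1)).length + Ld + B.length := by
    rw [hn, hDdef, hB]; simp [hLd]; omega
  obtain ⟨hTdne, hTdlast, hTdcount, _, _⟩ := hsent d hd1 hdt
  have hLd1 : 1 ≤ Ld := by
    rw [hLd]; exact List.length_pos_iff.mpr hTdne
  have hsentP : sent d ∉ P := hP d hd1 hdt
  -- suffix decomposition
  have hsufeq : ∀ p, 1 ≤ p → p ≤ Ld → suf D (st + p - 1) = suf (T d) p ++ B := by
    intro p h1 h2
    rw [hDdef, hB, suf, suf]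
    have h3 : st + p - 1 - 1 = (concatDocs T (d - 1)).length + (p - 1) := by omega
    rw [h3, List.drop_append]
    have h4 : (concatDocs T (d-1)).length + (p-1) - (concatDocs T (d-1)).length = p - 1 := by
      omega
    rw [List.drop_eq_nil_of_le (by omega), h4, List.nil_append,
      List.drop_append_of_le_length (by omega)]
  have hmemI : ∀ i, sp ≤ i → i ≤ ep → i ∈ Set.Icc 1 n := fun i h1 h2 =>
    ⟨le_trans hsp h1, le_trans h2 hep⟩
  have hrange : ∀ i, sp ≤ i → i ≤ ep → DA i = d →
      st ≤ SA i ∧ SA i < st + Ld := by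
    intro i h1 h2 h3
    have h := hDA i (hmemI i h1 h2)
    rw [h3] at h
    exact ⟨h.2.2.1, h.2.2.2⟩
  -- local prefix characterization
  have hprefix_iff : ∀ p, 1 ≤ p → p ≤ Ld →
      (P <+: suf D (st + p - 1) ↔ P <+: suf (T d) p) := by
    intro p h1 h2
    rw [hsufeq p h1 h2]
    constructor
    · intro h
      rcases List.prefix_or_prefix_of_prefix h (List.prefix_append _ _) with h' | h'
      · exact h'
      · exact absurd (h'.subset (sent_mem_suf hTdlast h1 h2)) hsentP
    · intro h; exact h.trans (List.prefix_append _ _)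
  -- global index from local occurrence
  have hglob : ∀ p, 1 ≤ p → p ≤ Ld → P <+: suf (T d) p →
      ∃ i, sp ≤ i ∧ i ≤ ep ∧ DA i = d ∧ SA i = st + p - 1 := by
    intro p h1 h2 hpre
    have hg1 : 1 ≤ st + p - 1 := by omega
    have hgn : st + p - 1 ≤ n := by omega
    obtain ⟨i, hi, hSAi⟩ := hbij.surjOn (Set.mem_Icc.mpr ⟨hg1, hgn⟩)
    have hPg : P <+: suf D (SA i) := by
      rw [hSAi]; exact (hprefix_iff p h1 h2).2 hpre
    have hie := (hint i hi).2 hPg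
    have hDAi := hDA i hi
    have hDAd : DA i = d := by
      refine doc_unique T hDAi.1 hDAi.2.1 hd1 hdt hDAi.2.2.1 hDAi.2.2.2 ?_ ?_
      · rw [hSAi]; omega
      · rw [hSAi]; omega
    exact ⟨i, hie.1, hie.2, hDAd, hSAi⟩
  -- membership of local positions
  have hloc : ∀ i, sp ≤ i → i ≤ ep → DA i = d →
      1 ≤ SA i - st + 1 ∧ SA i - st + 1 ≤ Ld ∧ st + (SA i - st + 1) - 1 = SA i := by
    intro i h1 h2 h3
    have := hrange i h1 h2 h3
    omega
  -- local occurrence from global index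
  have hlocc : ∀ i, sp ≤ i → i ≤ ep → DA i = d → P <+: suf (T d) (SA i - st + 1) := by
    intro i h1 h2 h3
    obtain ⟨hp1, hp2, hpe⟩ := hloc i h1 h2 h3
    have hPg := (hint i (hmemI i h1 h2)).1 ⟨h1, h2⟩
    rw [← hpe] at hPg
    exact (hprefix_iff _ hp1 hp2).1 hPg
  -- the local lex comparison
  have hlocal_lt : ∀ i j, sp ≤ i → i ≤ ep → DA i = d → sp ≤ j → j ≤ ep → DA j = d →
      i < j → listLt (suf (T d) (SA i - st + 1)) (suf (T d) (SA j - st + 1)) := by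
    intro i j hi1 hi2 hi3 hj1 hj2 hj3 hij
    obtain ⟨hp1, hp2, hpe⟩ := hloc i hi1 hi2 hi3
    obtain ⟨hq1, hq2, hqe⟩ := hloc j hj1 hj2 hj3
    have hglt := hsort i j (hmemI i hi1 hi2) (hmemI j hj1 hj2) hij
    have e1 := hsufeq _ hp1 hp2
    rw [hpe] at e1
    have e2 := hsufeq _ hq1 hq2
    rw [hqe] at e2
    rw [e1, e2] at hglt
    have hpq : SA i - st + 1 ≠ SA j - st + 1 := by
      intro h
      have hSA : SA i = SA j := by omega
      exact Nat.ne_of_lt hij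
        (hbij.injOn (hmemI i hi1 hi2) (hmemI j hj1 hj2) hSA)
    exact lex_of_lex_append hglt
      (suf_not_prefix hTdlast hTdcount hp1 hp2 hq1 hq2 hpq)
      (suf_not_prefix hTdlast hTdcount hq1 hq2 hp1 hp2 hpq.symm)
  -- ψ
  set ψ := fun i => ISAd d (SA i - st + 1) with hψ
  have hψfact : ∀ i, sp ≤ i → i ≤ ep → DA i = d →
      (1 ≤ ψ i ∧ ψ i ≤ Ld) ∧ SAd d (ψ i) = SA i - st + 1 := by
    intro i h1 h2 h3
    obtain ⟨hp1, hp2, _⟩ := hloc i h1 h2 h3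
    have := hISAd d hd1 hdt (SA i - st + 1) (Set.mem_Icc.mpr ⟨hp1, hp2⟩)
    exact ⟨Set.mem_Icc.mp this.1, this.2⟩
  have hψmono : ∀ i j, sp ≤ i → i ≤ ep → DA i = d → sp ≤ j → j ≤ ep → DA j = d →
      i < j → ψ i < ψ j := by
    intro i j hi1 hi2 hi3 hj1 hj2 hj3 hij
    have hlt := hlocal_lt i j hi1 hi2 hi3 hj1 hj2 hj3 hij
    obtain ⟨hψi, hei⟩ := hψfact i hi1 hi2 hi3
    obtain ⟨hψj, hej⟩ := hψfact j hj1 hj2 hj3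
    rcases lt_trichotomy (ψ i) (ψ j) with h | h | h
    · exact h
    · exfalso
      have : SA i - st + 1 = SA j - st + 1 := by rw [← hei, ← hej, h]
      rw [this] at hlt
      exact listLt_irrefl _ hlt
    · exfalso
      have := hsortd d hd1 hdt (ψ j) (ψ i)
        (Set.mem_Icc.mpr hψj) (Set.mem_Icc.mpr hψi) h
      rw [hei, hej] at this
      exact listLt_asymm this hlt
  have hlr : l ≤ r := hrmax l hlsp hlep hlDA
  have hψlr : ψ l ≤ ψ r := by
    rcases Nat.lt_or_eq_of_le hlr with h | h
    · exact le_of_lt (hψmono l r hlsp hlep hlDA hrsp hrep hrDA h)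
    · rw [h]
  -- the two Finsets
  set S := (Finset.Icc sp ep).filter (fun i => DA i = d) with hS
  have hmemS : ∀ i, i ∈ S ↔ sp ≤ i ∧ i ≤ ep ∧ DA i = d := by
    intro i
    simp [hS, Finset.mem_filter, Finset.mem_Icc, and_assoc]
  have card1 : S.card
      = ((Finset.Icc 1 Ld).filter (fun p => P <+: suf (T d) p)).card := by
    apply Finset.card_bij (fun i _ => SA i - st + 1)
    · intro i hi
      rw [hmemS] at hi
      obtain ⟨h1, h2, h3⟩ := hi
      obtain ⟨hp1, hp2, _⟩ := hloc i h1 h2 h3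
      exact Finset.mem_filter.mpr ⟨Finset.mem_Icc.mpr ⟨hp1, hp2⟩, hlocc i h1 h2 h3⟩
    · intro i hi j hj h
      rw [hmemS] at hi hj
      obtain ⟨hil, hir, _⟩ := hloc i hi.1 hi.2.1 hi.2.2
      obtain ⟨hjl, hjr, _⟩ := hloc j hj.1 hj.2.1 hj.2.2
      obtain ⟨hi', _⟩ := hrange i hi.1 hi.2.1 hi.2.2
      obtain ⟨hj', _⟩ := hrange j hj.1 hj.2.1 hj.2.2
      have : SA i = SA j := by omega
      exact hbij.injOn (hmemI i hi.1 hi.2.1) (hmemI j hj.1 hj.2.1) this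
    · intro p hp
      obtain ⟨hp', hppre⟩ := Finset.mem_filter.mp hp
      obtain ⟨hp1, hp2⟩ := Finset.mem_Icc.mp hp'
      obtain ⟨i, h1, h2, h3, h4⟩ := hglob p hp1 hp2 hppre
      refine ⟨i, (hmemS i).mpr ⟨h1, h2, h3⟩, ?_⟩
      omega
  have card2 : S.card = (Finset.Icc (ψ l) (ψ r)).card := by
    apply Finset.card_bij (fun i _ => ψ i)
    · intro i hi
      rw [hmemS] at hi
      obtain ⟨h1, h2, h3⟩ := hi
      have hli : l ≤ i := hlmin i h1 h2 h3
      have hir : i ≤ r := hrmax i h1 h2 h3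
      refine Finset.mem_Icc.mpr ⟨?_, ?_⟩
      · rcases Nat.lt_or_eq_of_le hli with h | h
        · exact le_of_lt (hψmono l i hlsp hlep hlDA h1 h2 h3 h)
        · rw [h]
      · rcases Nat.lt_or_eq_of_le hir with h | h
        · exact le_of_lt (hψmono i r h1 h2 h3 hrsp hrep hrDA h)
        · rw [h]
    · intro i hi j hj h
      rw [hmemS] at hi hj
      by_contra hne
      rcases Nat.lt_or_ge i j with h' | h'
      · exact absurd h (Nat.ne_of_lt
          (hψmono i j hi.1 hi.2.1 hi.2.2 hj.1 hj.2.1 hj.2.2 h'))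
      · have h'' : j < i := by omega
        exact absurd h.symm (Nat.ne_of_lt
          (hψmono j i hj.1 hj.2.1 hj.2.2 hi.1 hi.2.1 hi.2.2 h''))
    · intro m hm
      obtain ⟨hm1, hm2⟩ := Finset.mem_Icc.mp hm
      obtain ⟨hψl, hel⟩ := hψfact l hlsp hlep hlDA
      obtain ⟨hψr, her⟩ := hψfact r hrsp hrep hrDA
      have hmI : m ∈ Set.Icc 1 Ld := Set.mem_Icc.mpr ⟨le_trans hψl.1 hm1, le_trans hm2 hψr.2⟩
      have hq : SAd d m ∈ Set.Icc 1 Ld := (hSAd d hd1 hdt).mapsTo hmI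
      have hnot1 : ¬ listLt (suf (T d) (SAd d m)) (suf (T d) (SAd d (ψ l))) := by
        intro hcon
        rcases Nat.lt_or_eq_of_le hm1 with h | h
        · exact listLt_asymm (hsortd d hd1 hdt (ψ l) m
            (Set.mem_Icc.mpr hψl) hmI h) hcon
        · rw [h] at hcon; exact listLt_irrefl _ hcon
      have hnot2 : ¬ listLt (suf (T d) (SAd d (ψ r))) (suf (T d) (SAd d m)) := by
        intro hcon
        rcases Nat.lt_or_eq_of_le hm2 with h | h
        · exact listLt_asymm (hsortd d hd1 hdt m (ψ r)
            hmI (Set.mem_Icc.mpr hψr) h) hcon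
        · rw [h] at hcon; exact listLt_irrefl _ hcon
      have hPl : P <+: suf (T d) (SAd d (ψ l)) := by
        rw [hel]; exact hlocc l hlsp hlep hlDA
      have hPr : P <+: suf (T d) (SAd d (ψ r)) := by
        rw [her]; exact hlocc r hrsp hrep hrDA
      have hPm : P <+: suf (T d) (SAd d m) :=
        prefix_of_between P _ _ _ hnot1 hnot2 hPl hPr
      obtain ⟨hq1, hq2⟩ := Set.mem_Icc.mp hq
      obtain ⟨i, h1, h2, h3, h4⟩ := hglob (SAd d m) hq1 hq2 hPm
      refine ⟨i, (hmemS i).mpr ⟨h1, h2, h3⟩, ?_⟩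
      have hpi : SA i - st + 1 = SAd d m := by omega
      obtain ⟨hψi, hei⟩ := hψfact i h1 h2 h3
      have : SAd d (ψ i) = SAd d m := by rw [hei, hpi]
      exact (hSAd d hd1 hdt).injOn (Set.mem_Icc.mpr hψi) hmI this
  have hgl : ISAd d (SA l - st + 1) = ψ l := rfl
  have hgr : ISAd d (SA r - st + 1) = ψ r := rfl
  rw [hgl, hgr, ← card1, card2, Nat.card_Icc]
  omega
end

section
/- In the suffix array SA of a string S whose suffixes are pairwise distinct, the set of suffix-array positions of suffixes having a fixed string P as a prefix forms a contiguous interval. -/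

private lemma lex_mid (P : List ℕ) : ∀ (a b c : List ℕ), List.Lex (· < ·) a b →
    List.Lex (· < ·) b c → P <+: a → P <+: c → P <+: b := by
  induction P with
  | nil => intro a b c _ _ _ _; exact List.nil_prefix
  | cons x Q ih =>
    intro a b c hab hbc ha hc
    obtain ⟨a', rfl⟩ := ha
    obtain ⟨c', rfl⟩ := hc
    cases b with
    | nil => cases hab
    | cons y b' =>
      cases hab with
      | cons h1 =>
        cases hbc with
        | cons h2 =>
          have := ih _ _ _ h1 h2 (Q.prefix_append a') (Q.prefix_append c')
          exact List.cons_prefix_cons.mpr ⟨rfl, this⟩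
        | rel h2 => exact absurd h2 (lt_irrefl _)
      | rel h1 =>
        cases hbc with
        | cons h2 => exact absurd h1 (lt_irrefl _)
        | rel h2 => exact absurd (h1.trans h2) (lt_irrefl _)

/-- Let `S` be a string of length `n` whose suffixes are
pairwise distinct, and let `SA` be its suffix array (a bijection of
`{1,…,n}` sorting the suffixes lexicographically).  Then the set of
suffix-array positions of suffixes having a fixed pattern `P` as a prefix
forms a contiguous interval `[sp..ep]` (possibly empty). -/
theorem pattern_positions_form_interval (n : ℕ) (S P : List ℕ) (SA : ℕ → ℕ)
    (hn : n = S.length)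
    (hbij : Set.BijOn SA (Set.Icc 1 n) (Set.Icc 1 n))
    (hdist : ∀ p q, p ∈ Set.Icc 1 n → q ∈ Set.Icc 1 n → p ≠ q →
      suf S p ≠ suf S q)
    (hsort : ∀ i j, i ∈ Set.Icc 1 n → j ∈ Set.Icc 1 n → i < j →
      listLt (suf S (SA i)) (suf S (SA j))) :
    ∃ sp ep, ∀ i ∈ Set.Icc 1 n,
      (P <+: suf S (SA i) ↔ sp ≤ i ∧ i ≤ ep) := by
  classical
  set A : Finset ℕ := (Finset.Icc 1 n).filter (fun i => P <+: suf S (SA i)) with hA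
  by_cases hne : A.Nonempty
  · refine ⟨A.min' hne, A.max' hne, ?_⟩
    intro i hi
    have hspA := A.min'_mem hne
    have hepA := A.max'_mem hne
    simp only [hA, Finset.mem_filter, Finset.mem_Icc] at hspA hepA
    constructor
    · intro hP
      have hiA : i ∈ A := by
        simp only [hA, Finset.mem_filter, Finset.mem_Icc]
        exact ⟨⟨hi.1, hi.2⟩, hP⟩
      exact ⟨A.min'_le _ hiA, A.le_max' _ hiA⟩
    · rintro ⟨h1, h2⟩
      rcases eq_or_lt_of_le h1 with rfl | h1
      · exact hspA.2
      rcases eq_or_lt_of_le h2 with rfl | h2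
      · exact hepA.2
      have hab := hsort _ i ⟨hspA.1.1, hspA.1.2⟩ hi h1
      have hbc := hsort i _ hi ⟨hepA.1.1, hepA.1.2⟩ h2
      exact lex_mid P _ _ _ hab hbc hspA.2 hepA.2
  · refine ⟨1, 0, ?_⟩
    intro i hi
    constructor
    · intro hP
      have hiA : i ∈ A := by
        simp only [hA, Finset.mem_filter, Finset.mem_Icc]
        exact ⟨⟨hi.1, hi.2⟩, hP⟩
      exact absurd ⟨i, hiA⟩ hne
    · rintro ⟨h1, h2⟩
      omega
end
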